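/- Let X = [x_1,…,x_p] ∈ ℝ^{n×p} be full rank with unit-norm columns, fix j, let P_{\j} denote the orthogonal projection onto the column space of X_{\j}, and set σ_j² = ‖x_j − P_{\j}x_j‖² > 0. Then a vector x̃_j ∈ ℝ^n satisfies the one-at-a-time knockoff conditions (i) X_{\j}ᵀx̃_j = X_{\j}ᵀx_j, (ii) x_jᵀx̃_j = 1 − s_j, (iii) x̃_jᵀx̃_j = 1, for a given s_j ≥ 0, if and only if s_j ∈ [0, 2σ_j²] and x̃_j = (s_j/σ_j²)P_{\j}x_j + (1 − s_j/σ_j²)x_j + r_j, where r_j ∈ ℝ^n is any vector with Xᵀr_j = 0 and ‖r_j‖² = 2s_j − s_j²/σ_j². -/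

import Mathlib

open Matrix

lemma span_orth {n p : ℕ} (X : Matrix (Fin n) (Fin p) ℝ) (j : Fin p) (px w : Fin n → ℝ)
    (hmem : px ∈ Submodule.span ℝ ((fun i : Fin p => Xᵀ i) '' {i : Fin p | i ≠ j}))
    (hw : ∀ i, i ≠ j → Xᵀ i ⬝ᵥ w = 0) : px ⬝ᵥ w = 0 := by
  induction hmem using Submodule.span_induction with
  | mem x hx => obtain ⟨i, hi, rfl⟩ := hx; exact hw i hi
  | zero => simp
  | add x y _ _ hx hy => simp [add_dotProduct, hx, hy]
  | smul a x _ hx => simp [smul_dotProduct, hx]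

/-- Proposition 2.2: characterization of the one-at-a-time knockoff for
column `j`.  Here `px = P_{\j} x_j` is the orthogonal projection of `x_j` onto the column
space of `X_{\j}` (characterized by membership in the span of the other columns and
orthogonality of the residual `x_j - px` to the other columns), and
`σj2 = ‖x_j - px‖² > 0`.  A vector `x̃_j` satisfies the knockoff conditions
(i) `X_{\j}ᵀx̃_j = X_{\j}ᵀx_j`, (ii) `x_jᵀx̃_j = 1 - s_j`, (iii) `x̃_jᵀx̃_j = 1`
if and only if `s_j ∈ [0, 2σ_j²]` and
`x̃_j = (s_j/σ_j²) P_{\j}x_j + (1 - s_j/σ_j²) x_j + r_j` for some `r_j` with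
`Xᵀ r_j = 0` and `‖r_j‖² = 2 s_j - s_j²/σ_j²`. -/
theorem stmt_4 (n p : ℕ) (X : Matrix (Fin n) (Fin p) ℝ)
    (hrank : X.rank = p)
    (hcols : ∀ j, Xᵀ j ⬝ᵥ Xᵀ j = 1)
    (j : Fin p)
    (px : Fin n → ℝ)
    (hpx_mem : px ∈ Submodule.span ℝ ((fun i : Fin p => Xᵀ i) '' {i : Fin p | i ≠ j}))
    (hpx_orth : ∀ i, i ≠ j → Xᵀ i ⬝ᵥ (Xᵀ j - px) = 0)
    (σj2 : ℝ) (hσj2 : σj2 = (Xᵀ j - px) ⬝ᵥ (Xᵀ j - px)) (hσpos : 0 < σj2)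
    (sj : ℝ) (hsj : 0 ≤ sj)
    (xt : Fin n → ℝ) :
    ((∀ i, i ≠ j → Xᵀ i ⬝ᵥ xt = Xᵀ i ⬝ᵥ Xᵀ j) ∧
        Xᵀ j ⬝ᵥ xt = 1 - sj ∧ xt ⬝ᵥ xt = 1)
      ↔ (sj ≤ 2 * σj2 ∧ ∃ r : Fin n → ℝ,
          Xᵀ.mulVec r = 0 ∧ r ⬝ᵥ r = 2 * sj - sj ^ 2 / σj2 ∧
          xt = (sj / σj2) • px + (1 - sj / σj2) • (Xᵀ j) + r) := by
  have hσ0 : σj2 ≠ 0 := ne_of_gt hσpos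
  have hunit : Xᵀ j ⬝ᵥ Xᵀ j = 1 := hcols j
  have hpu : px ⬝ᵥ (Xᵀ j - px) = 0 := span_orth X j px _ hpx_mem hpx_orth
  have hpxj : px ⬝ᵥ Xᵀ j = px ⬝ᵥ px := by
    have := hpu; rw [dotProduct_sub] at this; linarith
  have hjp : Xᵀ j ⬝ᵥ px = px ⬝ᵥ px := by rw [dotProduct_comm]; exact hpxj
  have hpp : px ⬝ᵥ px = 1 - σj2 := by
    rw [dotProduct_sub, sub_dotProduct, sub_dotProduct, hunit, hjp, hpxj] at hσj2
    linarith
  constructor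
  · rintro ⟨H1, H2, H3⟩
    have hpxt : px ⬝ᵥ (xt - Xᵀ j) = 0 := by
      apply span_orth X j px _ hpx_mem
      intro i hi
      rw [dotProduct_sub, H1 i hi, sub_self]
    have hpxt' : px ⬝ᵥ xt = 1 - σj2 := by
      rw [dotProduct_sub] at hpxt; rw [← hpp, ← hpxj]; linarith
    set r : Fin n → ℝ := xt - ((sj / σj2) • px + (1 - sj / σj2) • (Xᵀ j)) with hr
    have hri : ∀ i : Fin p, Xᵀ i ⬝ᵥ r = 0 := by
      intro i
      rcases eq_or_ne i j with rfl | hi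
      · simp only [hr, dotProduct_sub, dotProduct_add, dotProduct_smul, smul_eq_mul,
          H2, hjp, hpp, hunit]
        field_simp
        ring
      · have hip : Xᵀ i ⬝ᵥ px = Xᵀ i ⬝ᵥ Xᵀ j := by
          have := hpx_orth i hi; rw [dotProduct_sub] at this; linarith
        simp only [hr, dotProduct_sub, dotProduct_add, dotProduct_smul, smul_eq_mul,
          H1 i hi, hip]
        ring
    have hrp : px ⬝ᵥ r = 0 := span_orth X j px _ hpx_mem (fun i hi => hri i)
    have hrj : Xᵀ j ⬝ᵥ r = 0 := hri j
    refine ⟨?_, r, ?_, ?_, by simp [hr]⟩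
    · -- sj ≤ 2σ from r⬝r ≥ 0
      have hrr0 : (0:ℝ) ≤ r ⬝ᵥ r := Finset.sum_nonneg fun i _ => mul_self_nonneg _
      have hrr : r ⬝ᵥ r = 2 * sj - sj ^ 2 / σj2 := by
        have hxtp : xt ⬝ᵥ px = 1 - σj2 := by rw [dotProduct_comm]; exact hpxt'
        have hxtj : xt ⬝ᵥ Xᵀ j = 1 - sj := by rw [dotProduct_comm]; exact H2
        simp only [hr, dotProduct_sub, sub_dotProduct, dotProduct_add, add_dotProduct,
          dotProduct_smul, smul_dotProduct, smul_eq_mul, H2, H3, hpxt', hxtp, hxtj,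
          hpp, hpxj, hjp, hunit]
        field_simp
        ring
      rw [hrr] at hrr0
      have h2 : sj ^ 2 ≤ 2 * sj * σj2 := by
        have : sj ^ 2 / σj2 ≤ 2 * sj := by linarith
        calc sj ^ 2 = sj ^ 2 / σj2 * σj2 := by field_simp
        _ ≤ 2 * sj * σj2 := by nlinarith
      nlinarith [h2, hsj, hσpos, sq_nonneg (sj - 2 * σj2)]
    · ext i
      simp only [Matrix.mulVec, Pi.zero_apply]
      exact hri i
    · have hxtp : xt ⬝ᵥ px = 1 - σj2 := by rw [dotProduct_comm]; exact hpxt'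
      have hxtj : xt ⬝ᵥ Xᵀ j = 1 - sj := by rw [dotProduct_comm]; exact H2
      simp only [hr, dotProduct_sub, sub_dotProduct, dotProduct_add, add_dotProduct,
        dotProduct_smul, smul_dotProduct, smul_eq_mul, H2, H3, hpxt', hxtp, hxtj,
        hpp, hpxj, hjp, hunit]
      field_simp
      ring
  · rintro ⟨hsle, r, hXr, hrr, rfl⟩
    have hir : ∀ i : Fin p, Xᵀ i ⬝ᵥ r = 0 := by
      intro i
      have := congrFun hXr i
      exact this
    have hpr : px ⬝ᵥ r = 0 := span_orth X j px _ hpx_mem (fun i _ => hir i)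
    have hjr : Xᵀ j ⬝ᵥ r = 0 := hir j
    have hrp : r ⬝ᵥ px = 0 := by rw [dotProduct_comm]; exact hpr
    have hrj : r ⬝ᵥ Xᵀ j = 0 := by rw [dotProduct_comm]; exact hjr
    refine ⟨?_, ?_, ?_⟩
    · intro i hi
      have hip : Xᵀ i ⬝ᵥ px = Xᵀ i ⬝ᵥ Xᵀ j := by
        have := hpx_orth i hi; rw [dotProduct_sub] at this; linarith
      simp only [dotProduct_add, dotProduct_smul, smul_eq_mul, hip, hir i]
      ring
    · simp only [dotProduct_add, dotProduct_smul, smul_eq_mul, hjp, hpp, hunit, hjr]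
      field_simp
      ring
    · simp only [dotProduct_add, add_dotProduct, dotProduct_smul, smul_dotProduct,
        smul_eq_mul, hpp, hpxj, hjp, hunit, hpr, hjr, hrp, hrj, hrr]
      field_simp
      ring
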